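/- Let Z(w) := [[z₁,z₂,z₃],[z₂,z₄,z₅],[z₃,z₅,z₆]] with z₁ = (3/16)·w⁵, z₂ = (3√5/16)·w⁴, z₃ = (√10/8)·w³, z₄ = w³, z₅ = (3√2/4)·w², z₆ = (3/2)·w, and let Ω be the map sending a complex symmetric 3×3 matrix with entries z₁,…,z₆ to the vector (√2·z₆, √2·(z₁z₆ - z₃²), √2·(z₅² - z₄z₆), -√2·(z₆z₂² - 2z₃z₅z₂ + z₃²z₄ + z₁(z₅² - z₄z₆)), 2z₂z₃ - 2z₁z₅, 2z₃z₄ - 2z₂z₅, 2z₃z₅ - 2z₂z₆, √2·(z₁z₄ - z₂²), -√2·z₄, √2·z₁, √2, -2z₅, 2z₃, -2z₂) ∈ ℂ¹⁴. Then for every w ∈ ℂ, Ω(Z(w))ᵀ · C₁₄ · conj(Ω(Z(w))) = (1/256)·(w - conj(w))⁹. (This identifies the pulled-back Kähler potential on the sl(2)-orbit 𝔒₁ curve with that of a constant-curvature Lobachevsky plane of spin 9/2.) -/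

import Mathlib

noncomputable section

open Matrix

/-- The holomorphic symplectic section (in the `14'`-representation of `Sp(6,ℝ)`) of
the special Kähler manifold `Sp(6,ℝ)/(SU(3)×U(1))`, as a function of the entries
`z₁,…,z₆` of the complex symmetric matrix `Z`. -/
def Omega14 (z1 z2 z3 z4 z5 z6 : ℂ) : Fin 14 → ℂ :=
  let s2 : ℂ := (Real.sqrt 2 : ℝ)
  ![s2 * z6,
    s2 * (z1*z6 - z3^2),
    s2 * (z5^2 - z4*z6),
    -(s2 * (z6*z2^2 - 2*z3*z5*z2 + z3^2*z4 + z1*(z5^2 - z4*z6))),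
    2*z2*z3 - 2*z1*z5,
    2*z3*z4 - 2*z2*z5,
    2*z3*z5 - 2*z2*z6,
    s2 * (z1*z4 - z2^2),
    -(s2 * z4),
    s2 * z1,
    s2,
    -(2*z5),
    2*z3,
    -(2*z2)]

/-- The standard symplectic form of `Sp(14,ℝ)`, with 7×7 block form `[[0,1₇],[-1₇,0]]`. -/
def C14 : Matrix (Fin 14) (Fin 14) ℂ :=
  Matrix.of fun i j =>
    if (i : ℕ) + 7 = (j : ℕ) then 1 else if (j : ℕ) + 7 = (i : ℕ) then -1 else 0

/-- along the holomorphic curve `w ↦ Z(w)` of the orbit `𝔒₁`, the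
symplectic section satisfies
`Ω(Z(w))ᵀ · C₁₄ · conj(Ω(Z(w))) = (1/256)·(w - conj w)⁹`. -/
theorem stmt_19 (w : ℂ) :
    let z1 : ℂ := (3 / 16) * w ^ 5
    let z2 : ℂ := (3 * (Real.sqrt 5 : ℂ) / 16) * w ^ 4
    let z3 : ℂ := ((Real.sqrt 10 : ℂ) / 8) * w ^ 3
    let z4 : ℂ := w ^ 3
    let z5 : ℂ := (3 * (Real.sqrt 2 : ℂ) / 4) * w ^ 2
    let z6 : ℂ := (3 / 2) * w
    dotProduct (Omega14 z1 z2 z3 z4 z5 z6)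
        (C14.mulVec fun j => starRingEnd ℂ (Omega14 z1 z2 z3 z4 z5 z6 j)) =
      (1 / 256) * (w - starRingEnd ℂ w) ^ 9 := by
  have h2 : ((Real.sqrt 2 : ℝ) : ℂ) ^ 2 = 2 := by
    rw [← Complex.ofReal_pow, Real.sq_sqrt (by norm_num : (0:ℝ) ≤ 2)]; norm_num
  have h5 : ((Real.sqrt 5 : ℝ) : ℂ) ^ 2 = 5 := by
    rw [← Complex.ofReal_pow, Real.sq_sqrt (by norm_num : (0:ℝ) ≤ 5)]; norm_num
  have h10 : ((Real.sqrt 10 : ℝ) : ℂ) = ((Real.sqrt 2 : ℝ) : ℂ) * ((Real.sqrt 5 : ℝ) : ℂ) := by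
    rw [← Complex.ofReal_mul, ← Real.sqrt_mul (by norm_num : (0:ℝ) ≤ 2)]; norm_num
  simp only [Omega14, C14, dotProduct, Matrix.mulVec, Fin.sum_univ_succ,
    Fin.sum_univ_zero, Matrix.of_apply, Matrix.cons_val_zero, Matrix.cons_val_one,
    Matrix.head_cons, Matrix.cons_val_succ, _root_.map_mul, map_add, map_sub, map_neg,
    _root_.map_pow, map_div₀, map_ofNat, Complex.conj_ofReal, h10]
  norm_num
  set a : ℂ := ((Real.sqrt 2 : ℝ) : ℂ) with ha
  set b : ℂ := ((Real.sqrt 5 : ℝ) : ℂ) with hb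
  set u : ℂ := w with hu
  set v : ℂ := starRingEnd ℂ w with hv
  linear_combination
    (((-9:ℂ)/128)*v^9 + ((9:ℂ)/32)*u*v^8 + ((-27:ℂ)/64)*u^2*v^7 + ((9:ℂ)/32)*u^3*v^6 + ((-9:ℂ)/128)*u^4*v^5 + ((9:ℂ)/128)*u^5*v^4 + ((-9:ℂ)/32)*u^6*v^3 + ((27:ℂ)/64)*u^7*v^2 + ((-9:ℂ)/32)*u^8*v + ((9:ℂ)/128)*u^9 + ((7:ℂ)/512)*b^2*v^9 + ((-27:ℂ)/512)*b^2*u*v^8 + ((9:ℂ)/128)*b^2*u^2*v^7 + ((-3:ℂ)/128)*b^2*u^3*v^6 + ((9:ℂ)/128)*b^2*u^4*v^5 + ((-9:ℂ)/128)*b^2*u^5*v^4 + ((3:ℂ)/128)*b^2*u^6*v^3 + ((-9:ℂ)/128)*b^2*u^7*v^2 + ((27:ℂ)/512)*b^2*u^8*v + ((-7:ℂ)/512)*b^2*u^9 + ((27:ℂ)/256)*a^2*v^9 + ((27:ℂ)/256)*a^2*u^4*v^5 + ((-27:ℂ)/256)*a^2*u^5*v^4 + ((-27:ℂ)/256)*a^2*u^9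 + ((-5:ℂ)/256)*a^2*b^2*v^9 + ((-1:ℂ)/64)*a^2*b^2*u^3*v^6 + ((1:ℂ)/64)*a^2*b^2*u^6*v^3 + ((5:ℂ)/256)*a^2*b^2*u^9) * h2 +
    (((7:ℂ)/256)*v^9 + ((-27:ℂ)/256)*u*v^8 + ((9:ℂ)/64)*u^2*v^7 + ((-3:ℂ)/64)*u^3*v^6 + ((-9:ℂ)/128)*u^4*v^5 + ((9:ℂ)/128)*u^5*v^4 + ((3:ℂ)/64)*u^6*v^3 + ((-9:ℂ)/64)*u^7*v^2 + ((27:ℂ)/256)*u^8*v + ((-7:ℂ)/256)*u^9) * h5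

end
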